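/- Let 1 < p < ∞, σ > p−1, and set r = p−1, η = σ−p+1, and c_{p,σ} = 2^{−p}((σ−p+1)/(p−1))^{p−1}. Let m ≥ 1 and let V_0 > V_1 > ⋯ > V_m be real numbers with V_i > 0 for 0 ≤ i ≤ m−1 and V_m ≥ 0, and set δ_i = V_i − V_{i+1}. Then ∑_{i=0}^{m−1} V_i^σ / δ_i^r ≥ c_{p,σ} ∑_{j=1}^{m−1} j^r V_j^η. -/

import Mathlib

open Finset Real

/-- Core AM-GM fact: for `0 ≤ t ≤ 1` and `0 < a`, `t^a * (1 + a*(1-t)) ≤ 1`. -/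
lemma core_amgm {t a : ℝ} (ht : 0 ≤ t) (ht1 : t ≤ 1) (ha : 0 < a) :
    t ^ a * (1 + a * (1 - t)) ≤ 1 := by
  have ha1 : (0:ℝ) < a + 1 := by linarith
  have hs : (0:ℝ) ≤ 1 + a * (1 - t) := by nlinarith
  have hw : a / (a + 1) + 1 / (a + 1) = 1 := by field_simp
  have h := Real.geom_mean_le_arith_mean2_weighted
    (by positivity : (0:ℝ) ≤ a / (a+1)) (by positivity : (0:ℝ) ≤ 1 / (a+1))
    ht hs hw
  have hRHS : a / (a+1) * t + 1 / (a+1) * (1 + a * (1 - t)) = 1 := by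
    field_simp
    ring
  rw [hRHS] at h
  have h2 := Real.rpow_le_rpow (by positivity) h (le_of_lt ha1)
  rw [Real.one_rpow, Real.mul_rpow (by positivity) (by positivity),
    ← Real.rpow_mul ht, ← Real.rpow_mul hs,
    div_mul_cancel₀ _ (ne_of_gt ha1), one_div, inv_mul_cancel₀ (ne_of_gt ha1),
    Real.rpow_one] at h2
  exact h2

/-- Key pointwise estimate: for `0 < y < x`, `0 < a`,
`(x - y) * x ^ (-(a+1)) ≤ (1/a) * (y ^ (-a) - x ^ (-a))`. -/
lemma key_pointwise {x y a : ℝ} (hy : 0 < y) (hyx : y < x) (ha : 0 < a) :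
    (x - y) * x ^ (-(a+1)) ≤ (1/a) * (y ^ (-a) - x ^ (-a)) := by
  have hx : 0 < x := hy.trans hyx
  set t : ℝ := y / x with htdef
  have ht : 0 ≤ t := by positivity
  have ht1 : t ≤ 1 := by
    rw [htdef, div_le_one hx]; exact hyx.le
  have hcore := core_amgm ht ht1 ha
  have hya : (0:ℝ) < y ^ (-a) := Real.rpow_pos_of_pos hy _
  have hxa : (0:ℝ) < x ^ (-a) := Real.rpow_pos_of_pos hx _
  have hta : t ^ a * y ^ (-a) = x ^ (-a) := by
    rw [htdef, Real.div_rpow hy.le hx.le, Real.rpow_neg hy.le, Real.rpow_neg hx.le]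
    field_simp
  have h1 : x ^ (-a) * (1 + a * (1 - t)) ≤ y ^ (-a) := by
    calc x ^ (-a) * (1 + a * (1 - t)) = t ^ a * (1 + a * (1 - t)) * y ^ (-a) := by
          rw [show t ^ a * (1 + a * (1 - t)) * y ^ (-a)
              = (t ^ a * y ^ (-a)) * (1 + a * (1 - t)) from by ring, hta]
      _ ≤ 1 * y ^ (-a) := mul_le_mul_of_nonneg_right hcore hya.le
      _ = y ^ (-a) := one_mul _
  have hxsplit : x ^ (-(a+1)) = x ^ (-a) * x⁻¹ := by
    rw [show (-(a+1)) = (-a) + (-1) from by ring, Real.rpow_add hx, Real.rpow_neg_one]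
  have hfrac : (x - y) * x ^ (-(a+1)) = x ^ (-a) * (1 - t) := by
    rw [hxsplit, htdef]
    field_simp
  rw [hfrac]
  have h2 : a * (x ^ (-a) * (1 - t)) ≤ y ^ (-a) - x ^ (-a) := by nlinarith
  have h3 := mul_le_mul_of_nonneg_left h2 (le_of_lt (by positivity : (0:ℝ) < 1/a))
  have h4 : (1/a) * (a * (x ^ (-a) * (1 - t))) = x ^ (-a) * (1 - t) := by
    field_simp
  linarith

/-- For `1 < p`, `σ > p - 1`, `r = p - 1`, `η = σ - p + 1`,
`c_{p,σ} = 2^{-p}((σ-p+1)/(p-1))^{p-1}` and a strictly decreasing chain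
`V_0 > V_1 > ⋯ > V_m` with `V_i > 0` for `i ≤ m-1` and `V_m ≥ 0`, setting
`δ_i = V_i - V_{i+1}`, one has
`∑_{i=0}^{m-1} V_i^σ / δ_i^r ≥ c_{p,σ} ∑_{j=1}^{m-1} j^r V_j^η`. -/
theorem stmt6 (p σ : ℝ) (hp : 1 < p) (hσ : p - 1 < σ) (m : ℕ) (hm : 1 ≤ m)
    (V : ℕ → ℝ) (hdec : ∀ i, i < m → V (i + 1) < V i)
    (hpos : ∀ i, i ≤ m - 1 → 0 < V i) (hVm : 0 ≤ V m) :
    (2 : ℝ) ^ (-p) * ((σ - p + 1) / (p - 1)) ^ (p - 1) *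
        ∑ j ∈ Finset.Icc 1 (m - 1), (j : ℝ) ^ (p - 1) * (V j) ^ (σ - p + 1) ≤
      ∑ i ∈ Finset.range m, (V i) ^ σ / (V i - V (i + 1)) ^ (p - 1) := by
  have hr : (0:ℝ) < p - 1 := by linarith
  set r : ℝ := p - 1 with hrdef
  set η : ℝ := σ - p + 1 with hηdef
  have hη : (0:ℝ) < η := by rw [hηdef]; linarith
  have hσ0 : (0:ℝ) < σ := by nlinarith
  have hσe : σ = η + r := by rw [hηdef, hrdef]; ring
  have hp0 : (0:ℝ) < p := by linarith
  set a : ℝ := η / r with hadef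
  have ha : (0:ℝ) < a := by positivity
  set X : ℕ → ℝ := fun i => V i ^ σ / (V i - V (i+1)) ^ r with hX
  have hVpos : ∀ i, i < m → 0 < V i := fun i hi => hpos i (by omega)
  have hδpos : ∀ i, i < m → 0 < V i - V (i+1) := fun i hi => sub_pos.2 (hdec i hi)
  have hXpos : ∀ i, i < m → 0 < X i := fun i hi =>
    div_pos (Real.rpow_pos_of_pos (hVpos i hi) _) (Real.rpow_pos_of_pos (hδpos i hi) _)
  -- Step B: the per-j window bound
  have stepB : ∀ j : ℕ, 1 ≤ j → j ≤ m - 1 →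
      2 ^ (-p) * (η / r) ^ r * ((j:ℝ) ^ r * V j ^ η)
        ≤ (∑ i ∈ Finset.Ico (j/2) j, X i) / (j:ℝ) := by
    intro j hj1 hjm
    have hjm' : j < m := by omega
    have hjR : (0:ℝ) < (j:ℝ) := by exact_mod_cast Nat.pos_of_ne_zero (by omega)
    have hVj : 0 < V j := hpos j hjm
    set I : Finset ℕ := Finset.Ico (j/2) j with hI
    set S : ℝ := ∑ i ∈ I, X i with hS
    have hS0 : 0 ≤ S := Finset.sum_nonneg fun i hi => by
      obtain ⟨_, h2⟩ := Finset.mem_Ico.1 hi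
      exact (hXpos i (by omega)).le
    -- pointwise bound on X i ^ (-(1/r))
    have hQle : ∑ i ∈ I, (X i) ^ (-(1/r)) ≤ (r/η) * (V j) ^ (-a) := by
      have pointwise : ∀ i ∈ I, (X i) ^ (-(1/r))
          ≤ (r/η) * ((V (i+1)) ^ (-a) - (V i) ^ (-a)) := by
        intro i hi
        obtain ⟨hil, hiu⟩ := Finset.mem_Ico.1 hi
        have him : i < m := by omega
        have hVi : 0 < V i := hVpos i him
        have hVi1 : 0 < V (i+1) := hpos _ (by omega)
        have hlt : V (i+1) < V i := hdec i him
        have hδ : 0 < V i - V (i+1) := hδpos i him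
        have hXi : (X i) ^ (-(1/r)) = (V i - V (i+1)) * (V i) ^ (-(a+1)) := by
          rw [hX]
          simp only
          rw [Real.div_rpow (Real.rpow_nonneg hVi.le σ) (Real.rpow_nonneg hδ.le r),
            ← Real.rpow_mul hVi.le, ← Real.rpow_mul hδ.le,
            show σ * (-(1/r)) = -(a+1) from by
              rw [hσe, hadef]; field_simp,
            show r * (-(1/r)) = -1 from by field_simp,
            Real.rpow_neg_one]
          field_simp
        rw [hXi]
        have hk := key_pointwise hVi1 hlt ha
        have h1a : (1:ℝ)/a = r/η := by rw [hadef]; field_simp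
        rw [h1a] at hk
        exact hk
      calc ∑ i ∈ I, (X i) ^ (-(1/r))
          ≤ ∑ i ∈ I, (r/η) * ((V (i+1)) ^ (-a) - (V i) ^ (-a)) :=
            Finset.sum_le_sum pointwise
        _ = (r/η) * ∑ i ∈ I, ((V (i+1)) ^ (-a) - (V i) ^ (-a)) := by
            rw [Finset.mul_sum]
        _ = (r/η) * ((V j) ^ (-a) - (V (j/2)) ^ (-a)) := by
            congr 1
            have h2j : j/2 ≤ j := Nat.div_le_self j 2
            have e1 := Finset.sum_Ico_consecutive
              (fun i => (V (i+1)) ^ (-a) - (V i) ^ (-a)) (Nat.zero_le (j/2)) h2j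
            have e2 : ∑ i ∈ Finset.Ico 0 (j/2), ((V (i+1)) ^ (-a) - (V i) ^ (-a))
                = (V (j/2)) ^ (-a) - (V 0) ^ (-a) := by
              rw [show Finset.Ico 0 (j/2) = Finset.range (j/2) from by
                rw [Finset.range_eq_Ico]]
              exact Finset.sum_range_sub (fun i => (V i) ^ (-a)) (j/2)
            have e3 : ∑ i ∈ Finset.Ico 0 j, ((V (i+1)) ^ (-a) - (V i) ^ (-a))
                = (V j) ^ (-a) - (V 0) ^ (-a) := by
              rw [show Finset.Ico 0 j = Finset.range j from by rw [Finset.range_eq_Ico]]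
              exact Finset.sum_range_sub (fun i => (V i) ^ (-a)) j
            rw [hI]
            linarith
        _ ≤ (r/η) * (V j) ^ (-a) := by
            have h0 : (0:ℝ) ≤ (V (j/2)) ^ (-a) := Real.rpow_nonneg (hVpos _ (by omega)).le _
            have hrη : (0:ℝ) < r/η := by positivity
            nlinarith
    -- Hölder
    have hpq : p.HolderConjugate (p/(p-1)) := (Real.holderConjugate_iff_eq_conjExponent hp).2 rfl
    set q : ℝ := p / (p-1) with hqdef
    have hq0 : (0:ℝ) < q := by rw [hqdef]; positivity
    have hold := Real.inner_le_Lp_mul_Lq (s := I)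
      (f := fun i => (X i) ^ (1/p)) (g := fun i => (X i) ^ (-(1/p))) hpq
    have hlhs : ∑ i ∈ I, ((X i) ^ (1/p)) * ((X i) ^ (-(1/p))) = ((j - j/2 : ℕ) : ℝ) := by
      rw [show ((j - j/2 : ℕ) : ℝ) = ∑ _i ∈ I, (1:ℝ) from by
        rw [Finset.sum_const, nsmul_eq_mul, mul_one, hI, Nat.card_Ico]]
      refine Finset.sum_congr rfl fun i hi => ?_
      obtain ⟨_, h2⟩ := Finset.mem_Ico.1 hi
      rw [← Real.rpow_add (hXpos i (by omega))]
      norm_num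
    have hfp : ∀ i ∈ I, |(X i) ^ (1/p)| ^ p = X i := by
      intro i hi
      obtain ⟨_, h2⟩ := Finset.mem_Ico.1 hi
      have hXi := hXpos i (by omega)
      rw [abs_of_nonneg (Real.rpow_nonneg hXi.le _), ← Real.rpow_mul hXi.le,
        one_div_mul_cancel (ne_of_gt hp0), Real.rpow_one]
    have hgq : ∀ i ∈ I, |(X i) ^ (-(1/p))| ^ q = (X i) ^ (-(1/r)) := by
      intro i hi
      obtain ⟨_, h2⟩ := Finset.mem_Ico.1 hi
      have hXi := hXpos i (by omega)
      rw [abs_of_nonneg (Real.rpow_nonneg hXi.le _), ← Real.rpow_mul hXi.le]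
      congr 1
      rw [hqdef, ← hrdef]
      field_simp
    rw [hlhs, Finset.sum_congr rfl hfp, Finset.sum_congr rfl hgq] at hold
    -- hold : (j - j/2 : ℕ) ≤ S ^ (1/p) * (∑ X^(-(1/r))) ^ (1/q)
    have hQ0 : 0 ≤ ∑ i ∈ I, (X i) ^ (-(1/r)) := Finset.sum_nonneg fun i hi => by
      obtain ⟨_, h2⟩ := Finset.mem_Ico.1 hi
      exact Real.rpow_nonneg (hXpos i (by omega)).le _
    have hB0 : (0:ℝ) ≤ (r/η) * (V j) ^ (-a) := by
      have := Real.rpow_nonneg hVj.le (-a)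
      positivity
    have h5 : ((j - j/2 : ℕ) : ℝ) ≤ S ^ (1/p) * ((r/η) * (V j) ^ (-a)) ^ (1/q) := by
      refine le_trans hold (mul_le_mul_of_nonneg_left ?_ (Real.rpow_nonneg hS0 _))
      exact Real.rpow_le_rpow hQ0 hQle (by positivity)
    have h6 := Real.rpow_le_rpow (by positivity) h5 hp0.le
    rw [Real.mul_rpow (Real.rpow_nonneg hS0 _) (Real.rpow_nonneg hB0 _),
      ← Real.rpow_mul hS0, ← Real.rpow_mul hB0,
      one_div_mul_cancel (ne_of_gt hp0), Real.rpow_one,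
      show 1/q * p = r from by rw [hqdef, ← hrdef]; field_simp] at h6
    -- h6 : (↑(j - j/2))^p ≤ S * ((r/η) * V j ^(-a))^r
    have hBr : ((r/η) * (V j) ^ (-a)) ^ r = (r/η) ^ r * (V j) ^ (-η) := by
      rw [Real.mul_rpow (by positivity) (Real.rpow_nonneg hVj.le _),
        ← Real.rpow_mul hVj.le,
        show (-a) * r = -η from by rw [hadef]; field_simp]
    rw [hBr] at h6
    -- k ≥ j/2
    have hkN : j ≤ 2 * (j - j/2) := by omega
    have hk : ((j:ℝ)/2) ≤ ((j - j/2 : ℕ) : ℝ) := by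
      have : (j:ℝ) ≤ 2 * ((j - j/2 : ℕ) : ℝ) := by exact_mod_cast hkN
      linarith
    have h7 : ((j:ℝ)/2) ^ p ≤ S * ((r/η) ^ r * (V j) ^ (-η)) :=
      le_trans (Real.rpow_le_rpow (by positivity) hk hp0.le) h6
    have hj2 : ((j:ℝ)/2) ^ p = (j:ℝ) ^ r * (j:ℝ) * 2 ^ (-p) := by
      rw [Real.div_rpow (by positivity) (by norm_num : (0:ℝ) ≤ 2),
        Real.rpow_neg (by norm_num : (0:ℝ) ≤ 2),
        show (j:ℝ) ^ p = (j:ℝ) ^ r * (j:ℝ) from by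
          rw [show p = r + 1 from by rw [hrdef]; ring, Real.rpow_add hjR, Real.rpow_one]]
      ring
    rw [hj2] at h7
    have e1 : (r/η) ^ r * (η/r) ^ r = 1 := by
      rw [← Real.mul_rpow (by positivity) (by positivity),
        div_mul_div_comm, mul_comm r η, div_self (by positivity : (0:ℝ) < η * r).ne',
        Real.one_rpow]
    have e2 : (V j) ^ (-η) * (V j) ^ η = 1 := by
      rw [← Real.rpow_add hVj]
      norm_num
    have hVjη : (0:ℝ) ≤ (η/r) ^ r * V j ^ η / (j:ℝ) := by
      have := Real.rpow_nonneg hVj.le η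
      positivity
    calc 2 ^ (-p) * (η / r) ^ r * ((j:ℝ) ^ r * V j ^ η)
        = ((j:ℝ) ^ r * (j:ℝ) * 2 ^ (-p)) * ((η/r) ^ r * V j ^ η / (j:ℝ)) := by
          field_simp
      _ ≤ (S * ((r/η) ^ r * (V j) ^ (-η))) * ((η/r) ^ r * V j ^ η / (j:ℝ)) :=
          mul_le_mul_of_nonneg_right h7 hVjη
      _ = (S / (j:ℝ)) * ((r/η) ^ r * (η/r) ^ r) * ((V j) ^ (-η) * V j ^ η) := by
          ring
      _ = S / (j:ℝ) := by rw [e1, e2]; ring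
  -- Assemble
  have hconv : ∑ i ∈ Finset.range m, V i ^ σ / (V i - V (i+1)) ^ r
      = ∑ i ∈ Finset.range m, X i := rfl
  rw [hconv, Finset.mul_sum]
  have hsub : ∀ j ∈ Finset.Icc 1 (m-1), Finset.Ico (j/2) j ⊆ Finset.range m := by
    intro j hj
    obtain ⟨h1, h2⟩ := Finset.mem_Icc.1 hj
    intro i hi
    obtain ⟨_, h4⟩ := Finset.mem_Ico.1 hi
    exact Finset.mem_range.2 (by omega)
  calc ∑ j ∈ Finset.Icc 1 (m-1), 2 ^ (-p) * (η / r) ^ r * ((j:ℝ) ^ r * V j ^ η)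
      ≤ ∑ j ∈ Finset.Icc 1 (m-1), (∑ i ∈ Finset.Ico (j/2) j, X i) / (j:ℝ) := by
        refine Finset.sum_le_sum fun j hj => ?_
        obtain ⟨h1, h2⟩ := Finset.mem_Icc.1 hj
        exact stepB j h1 h2
    _ = ∑ j ∈ Finset.Icc 1 (m-1), ∑ i ∈ Finset.range m,
          (if i ∈ Finset.Ico (j/2) j then X i / (j:ℝ) else 0) := by
        refine Finset.sum_congr rfl fun j hj => ?_
        rw [Finset.sum_ite_mem, Finset.inter_eq_right.2 (hsub j hj), Finset.sum_div]
    _ = ∑ i ∈ Finset.range m, ∑ j ∈ Finset.Icc 1 (m-1),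
          (if i ∈ Finset.Ico (j/2) j then X i / (j:ℝ) else 0) := Finset.sum_comm
    _ ≤ ∑ i ∈ Finset.range m, X i := by
        refine Finset.sum_le_sum fun i hi => ?_
        have him : i < m := Finset.mem_range.1 hi
        have hXi0 : 0 ≤ X i := (hXpos i him).le
        calc ∑ j ∈ Finset.Icc 1 (m-1), (if i ∈ Finset.Ico (j/2) j then X i / (j:ℝ) else 0)
            ≤ ∑ j ∈ Finset.Icc 1 (m-1),
                (if j ∈ Finset.Icc (i+1) (2*i+1) then X i / ((i:ℝ)+1) else 0) := by
              refine Finset.sum_le_sum fun j hj => ?_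
              by_cases hcase : i ∈ Finset.Ico (j/2) j
              · obtain ⟨h1, h2⟩ := Finset.mem_Ico.1 hcase
                rw [if_pos hcase, if_pos (Finset.mem_Icc.2 ⟨by omega, by omega⟩)]
                have hji : ((i:ℝ)+1) ≤ (j:ℝ) := by exact_mod_cast h2
                exact div_le_div_of_nonneg_left hXi0 (by positivity) hji
              · rw [if_neg hcase]
                split_ifs
                · positivity
                · exact le_refl 0
          _ ≤ X i := by
              rw [Finset.sum_ite_mem, Finset.sum_const, nsmul_eq_mul]
              have hcard : ((Finset.Icc 1 (m-1) ∩ Finset.Icc (i+1) (2*i+1)).card : ℝ)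
                  ≤ ((i:ℝ) + 1) := by
                have h1 : (Finset.Icc 1 (m-1) ∩ Finset.Icc (i+1) (2*i+1)).card
                    ≤ (Finset.Icc (i+1) (2*i+1)).card :=
                  Finset.card_le_card Finset.inter_subset_right
                have h2 : (Finset.Icc (i+1) (2*i+1)).card = i + 1 := by
                  rw [Nat.card_Icc]; omega
                have := h1.trans_eq h2
                exact_mod_cast this
              calc ((Finset.Icc 1 (m-1) ∩ Finset.Icc (i+1) (2*i+1)).card : ℝ) * (X i / ((i:ℝ)+1))
                  ≤ ((i:ℝ)+1) * (X i / ((i:ℝ)+1)) :=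
                    mul_le_mul_of_nonneg_right hcard (by positivity)
                _ = X i := by field_simp
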